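/- Let n ≥ 1 and k ≥ 1 be natural numbers, let l = lcm(n, n+1, …, n+k), and for each i with 0 ≤ i ≤ k let m_i be a natural number with gcd(m_i, n+i) = 1. Then the natural number ∑_{i=0}^{k} m_i · ( l/(n+i) ) is odd. -/

import Mathlib

open Finset

lemma aux_lcm_ne_zero (s : Finset ℕ) (f : ℕ → ℕ) (hf : ∀ i ∈ s, f i ≠ 0) :
    s.lcm f ≠ 0 := by
  induction s using Finset.induction with
  | empty => simp
  | @insert a s ha ih =>
    rw [Finset.lcm_insert]
    exact Nat.lcm_ne_zero (hf a (Finset.mem_insert_self a s))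
      (ih fun i hi => hf i (Finset.mem_insert_of_mem hi))

lemma aux_lcm_factorization (s : Finset ℕ) (f : ℕ → ℕ) (hf : ∀ i ∈ s, f i ≠ 0) (p : ℕ) :
    (s.lcm f).factorization p = s.sup fun i => (f i).factorization p := by
  induction s using Finset.induction with
  | empty => simp
  | @insert a s ha ih =>
    rw [Finset.lcm_insert, Finset.sup_insert]
    have h1 : f a ≠ 0 := hf a (Finset.mem_insert_self a s)
    have h2 : s.lcm f ≠ 0 := aux_lcm_ne_zero s f fun i hi => hf i (Finset.mem_insert_of_mem hi)
    rw [show lcm (f a) (s.lcm f) = Nat.lcm (f a) (s.lcm f) from rfl,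
      Nat.factorization_lcm h1 h2, Finsupp.sup_apply,
      ih fun i hi => hf i (Finset.mem_insert_of_mem hi)]

theorem kurschak_sum_odd
    (n k : ℕ) (hn : 1 ≤ n) (hk : 1 ≤ k)
    (l : ℕ) (hl : l = (Finset.range (k + 1)).lcm (fun i => n + i))
    (m : ℕ → ℕ) (hcop : ∀ i ≤ k, Nat.gcd (m i) (n + i) = 1) :
    Odd (∑ i ∈ Finset.range (k + 1), m i * (l / (n + i))) := by
  have hfz : ∀ i ∈ Finset.range (k + 1), n + i ≠ 0 := fun i _ => by omega
  have hl0 : l ≠ 0 := hl ▸ aux_lcm_ne_zero _ _ hfz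
  set v : ℕ → ℕ := fun i => (n + i).factorization 2 with hv
  set M : ℕ := (Finset.range (k + 1)).sup v with hM
  have hvl : l.factorization 2 = M := by
    rw [hl]; exact aux_lcm_factorization _ _ hfz 2
  -- there is i0 attaining the sup
  obtain ⟨i0, hi0mem, hi0⟩ := Finset.exists_mem_eq_sup (Finset.range (k + 1))
    (by exact ⟨0, by simp⟩) v
  have hi0k : i0 ≤ k := by simpa [Nat.lt_succ_iff] using hi0mem
  -- M ≥ 1
  have hM1 : 1 ≤ M := by
    rcases Nat.even_or_odd n with he | ho
    · have : 1 ≤ v 0 := by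
        have : (2 : ℕ) ∣ n + 0 := by simpa using he.two_dvd
        exact (Nat.Prime.factorization_pos_of_dvd Nat.prime_two (by omega) this)
      exact le_trans this (Finset.le_sup (by simp))
    · have : 1 ≤ v 1 := by
        have : (2 : ℕ) ∣ n + 1 := by
          rcases ho with ⟨t, ht⟩; omega
        exact (Nat.Prime.factorization_pos_of_dvd Nat.prime_two (by omega) this)
      exact le_trans this (Finset.le_sup (Finset.mem_range.mpr (by omega)))
  -- uniqueness of maximal valuation
  have huniq : ∀ j ∈ Finset.range (k + 1), j ≠ i0 → v j < M := by
    intro j hjmem hj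
    have hle : v j ≤ M := Finset.le_sup hjmem
    rcases lt_or_eq_of_le hle with h | h
    · exact h
    exfalso
    -- both j and i0 have valuation M; wlog set up a < b
    have key : ∀ x y : ℕ, x ∈ Finset.range (k+1) → y ∈ Finset.range (k+1) → x < y →
        v x = M → v y = M → False := by
      intro x y hx hy hxy hvx hvy
      have hx0 : n + x ≠ 0 := by omega
      have hy0 : n + y ≠ 0 := by omega
      have hvx' : (n + x).factorization 2 = M := hvx
      have hvy' : (n + y).factorization 2 = M := hvy
      have hdx : 2 ^ M ∣ n + x := by
        rw [← hvx']; exact Nat.ordProj_dvd _ _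
      have hdy : 2 ^ M ∣ n + y := by
        rw [← hvy']; exact Nat.ordProj_dvd _ _
      obtain ⟨a, hax⟩ := hdx
      obtain ⟨b, hby⟩ := hdy
      have hpM : (0:ℕ) < 2 ^ M := by positivity
      have ha0 : a ≠ 0 := by rintro rfl; omega
      have hb0 : b ≠ 0 := by rintro rfl; omega
      have haodd : Odd a := by
        by_contra hae
        have h2a : 2 ∣ a := (Nat.not_odd_iff_even.mp hae).two_dvd
        have : 2 ^ (M + 1) ∣ n + x := by
          obtain ⟨c, hc⟩ := h2a
          exact ⟨c, by rw [hax, hc]; ring⟩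
        have := (Nat.Prime.pow_dvd_iff_le_factorization Nat.prime_two hx0).mp this
        rw [hvx'] at this; omega
      have hbodd : Odd b := by
        by_contra hbe
        have h2b : 2 ∣ b := (Nat.not_odd_iff_even.mp hbe).two_dvd
        have : 2 ^ (M + 1) ∣ n + y := by
          obtain ⟨c, hc⟩ := h2b
          exact ⟨c, by rw [hby, hc]; ring⟩
        have := (Nat.Prime.pow_dvd_iff_le_factorization Nat.prime_two hy0).mp this
        rw [hvy'] at this; omega
      have hab : a < b := by
        have hmul : 2 ^ M * a < 2 ^ M * b := by rw [← hax, ← hby]; omega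
        exact Nat.lt_of_mul_lt_mul_left hmul
      have hab2 : a + 1 < b := by
        rcases Nat.lt_or_ge (a + 1) b with h | h
        · exact h
        · exfalso
          have : a + 1 = b := by omega
          rcases haodd with ⟨t, ht⟩; rcases hbodd with ⟨s, hs⟩; omega
      -- c = 2^M * (a+1) lies strictly between n+x and n+y, within range
      set c : ℕ := 2 ^ M * (a + 1) with hc
      have hcx : n + x < c := by
        rw [hax, hc]; exact mul_lt_mul_of_pos_left (by omega) hpM
      have hcy : c < n + y := by
        rw [hby, hc]; exact mul_lt_mul_of_pos_left (by omega) hpM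
      have hxr : x < k + 1 := Finset.mem_range.mp hx
      have hyr : y < k + 1 := Finset.mem_range.mp hy
      obtain ⟨t, htc, htk⟩ : ∃ t, c = n + t ∧ t < k + 1 := ⟨c - n, by omega, by omega⟩
      have hdc : 2 ^ (M + 1) ∣ c := by
        have : (2:ℕ) ∣ a + 1 := by rcases haodd with ⟨s, hs⟩; omega
        obtain ⟨s, hs⟩ := this
        exact ⟨s, by rw [hc, hs]; ring⟩
      have hc0 : c ≠ 0 := by positivity
      have hvc := (Nat.Prime.pow_dvd_iff_le_factorization Nat.prime_two hc0).mp hdc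
      have hvt : (n + t).factorization 2 ≤ M := Finset.le_sup (f := v) (Finset.mem_range.mpr htk)
      rw [htc] at hvc
      omega
    rcases lt_or_gt_of_ne hj with hlt | hgt
    · exact key j i0 hjmem hi0mem hlt h hi0.symm
    · exact key i0 j hi0mem hjmem hgt hi0.symm h
  -- terms
  have hdvd : ∀ i ∈ Finset.range (k + 1), (n + i) ∣ l := by
    intro i hi; rw [hl]; exact Finset.dvd_lcm hi
  have hquotfact : ∀ i ∈ Finset.range (k + 1), (l / (n + i)).factorization 2 = M - v i := by
    intro i hi
    rw [Nat.factorization_div (hdvd i hi)]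
    simp [Finsupp.tsub_apply, hvl]; rfl
  have hquot0 : ∀ i ∈ Finset.range (k + 1), l / (n + i) ≠ 0 := by
    intro i hi
    exact Nat.ne_of_gt (Nat.div_pos (Nat.le_of_dvd (Nat.pos_of_ne_zero hl0) (hdvd i hi))
      (by omega))
  -- term at i0 is odd
  have hoddterm : Odd (m i0 * (l / (n + i0))) := by
    have hq : Odd (l / (n + i0)) := by
      rw [← Nat.not_even_iff_odd]
      intro h2
      have := Nat.Prime.factorization_pos_of_dvd Nat.prime_two (hquot0 i0 hi0mem) h2.two_dvd
      rw [hquotfact i0 hi0mem] at this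
      have hvi0 : v i0 = M := hi0.symm
      omega
    have hm : Odd (m i0) := by
      rw [← Nat.not_even_iff_odd]
      intro h2
      have h2n : (2:ℕ) ∣ n + i0 := by
        have hvi0 : (n + i0).factorization 2 = M := hi0.symm
        have : 2 ^ M ∣ n + i0 := by
          rw [← hvi0]; exact Nat.ordProj_dvd _ _
        exact dvd_trans (dvd_pow_self 2 (by omega : M ≠ 0)) this
      have := Nat.dvd_gcd h2.two_dvd h2n
      rw [hcop i0 hi0k] at this
      omega
    exact hm.mul hq
  -- other terms even
  have heventerm : ∀ j ∈ (Finset.range (k + 1)).erase i0, Even (m j * (l / (n + j))) := by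
    intro j hj
    obtain ⟨hjne, hjmem⟩ := Finset.mem_erase.mp hj
    have hlt := huniq j hjmem hjne
    have h2 : (2:ℕ) ∣ l / (n + j) := by
      apply Nat.dvd_of_factorization_pos
      rw [hquotfact j hjmem]
      omega
    obtain ⟨r, hr⟩ := h2
    have he : Even (l / (n + j)) := ⟨r, by omega⟩
    exact he.mul_left _
  rw [← Finset.add_sum_erase _ _ hi0mem]
  exact hoddterm.add_even (Finset.even_sum _ heventerm)
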